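/- Let Γ be a distance-biregular graph with k₀ > k₁. Then for every 1 ≤ i ≤ D₀ − 1: if i is even, k₀·b_{1,i} < k₁·b_{0,i} and k₁·c_{0,i} < k₀·c_{1,i} (i.e., b_{1,i}/b_{0,i} < k₁/k₀ < c_{1,i}/c_{0,i}); and if i is odd, k₀·b_{0,i} < k₁·b_{1,i} and k₁·c_{1,i} < k₀·c_{0,i} (i.e., b_{0,i}/b_{1,i} < k₁/k₀ < c_{0,i}/c_{1,i}). -/

import Mathlib

open Finset SimpleGraph

set_option linter.unusedSectionVars false
set_option maxHeartbeats 1000000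

section Aux

variable {V : Type} [Fintype V] [DecidableEq V] (G : SimpleGraph V) [DecidableRel G.Adj]

lemma dcount (P Q : V → Prop) (R : V → V → Prop) [DecidablePred P] [DecidablePred Q]
    [∀ a b, Decidable (R a b)] :
    ∑ z ∈ Finset.univ.filter P, (Finset.univ.filter fun w => Q w ∧ R z w).card
      = ∑ w ∈ Finset.univ.filter Q, (Finset.univ.filter fun z => P z ∧ R z w).card := by
  simp only [Finset.card_filter]
  rw [Finset.sum_filter, Finset.sum_filter]
  have l1 : ∀ z : V, (if P z then (∑ w : V, if Q w ∧ R z w then 1 else 0) else 0)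
      = ∑ w : V, if P z ∧ Q w ∧ R z w then (1:ℕ) else 0 := by
    intro z
    by_cases hP : P z <;> simp [hP]
  have l2 : ∀ w : V, (if Q w then (∑ z : V, if P z ∧ R z w then 1 else 0) else 0)
      = ∑ z : V, if P z ∧ Q w ∧ R z w then (1:ℕ) else 0 := by
    intro w
    by_cases hQ : Q w <;> simp [hQ]
  rw [Finset.sum_congr rfl fun z _ => l1 z, Finset.sum_congr rfl fun w _ => l2 w]
  exact Finset.sum_comm

variable {σ : V → Fin 2}

set_option linter.unusedSectionVars false

lemma walk_par (hbip : ∀ x y : V, G.Adj x y → σ x ≠ σ y) : ∀ {u v : V} (p : G.Walk u v), (Even p.length ↔ σ u = σ v) := by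
  intro u v p
  induction p with
  | nil => simp
  | @cons u m v h q ih =>
    simp only [SimpleGraph.Walk.length_cons, Nat.even_add_one]
    have hne := hbip _ _ h
    rw [ih]
    revert hne
    generalize σ u = a; generalize σ m = bb; generalize σ v = cc
    revert a bb cc; decide

lemma dist_par (hbip : ∀ x y : V, G.Adj x y → σ x ≠ σ y) (hconn : G.Connected) (u v : V) : Even (G.dist u v) ↔ σ u = σ v := by
  obtain ⟨p, hp⟩ := hconn.exists_walk_length_eq_dist u v
  rw [← hp]
  exact walk_par G hbip p

lemma adj_dist_cases (hbip : ∀ x y : V, G.Adj x y → σ x ≠ σ y) (hconn : G.Connected) {z w : V} (h : G.Adj z w) (x : V) :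
    G.dist x w = G.dist x z + 1 ∨ G.dist x z = G.dist x w + 1 := by
  have hzw : G.dist z w = 1 := (G.dist_eq_one_iff_adj).mpr h
  have hwz : G.dist w z = 1 := (G.dist_eq_one_iff_adj).mpr h.symm
  have h1 : G.dist x w ≤ G.dist x z + 1 := by
    have := hconn.dist_triangle (u := x) (v := z) (w := w); omega
  have h2 : G.dist x z ≤ G.dist x w + 1 := by
    have := hconn.dist_triangle (u := x) (v := w) (w := z); omega
  have hp1 := dist_par G hbip hconn x z
  have hp2 := dist_par G hbip hconn x w
  have hne := hbip _ _ h
  have hiff : ¬ (Even (G.dist x z) ↔ Even (G.dist x w)) := by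
    rw [hp1, hp2]
    revert hne
    generalize σ x = a; generalize σ z = bb; generalize σ w = cc
    revert a bb cc; decide
  rw [Nat.even_iff, Nat.even_iff] at hiff
  omega

lemma exists_succ_adj (hconn : G.Connected) {x v z : V} {j : ℕ} (hz : G.dist x z = j)
    (hzv : G.dist z v + j = G.dist x v) (hlt : j < G.dist x v) :
    ∃ w, G.Adj z w ∧ G.dist x w = j + 1 ∧ G.dist w v + (j + 1) = G.dist x v := by
  obtain ⟨p, hp⟩ := hconn.exists_walk_length_eq_dist z v
  have hnil : ¬ p.Nil := by rw [SimpleGraph.Walk.not_nil_iff_lt_length]; omega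
  have hadj : G.Adj z (p.getVert 1) := p.adj_snd hnil
  have htl : p.tail.length + 1 = p.length := SimpleGraph.Walk.length_tail_add_one hnil
  have h3 : G.dist (p.getVert 1) v + 1 ≤ G.dist z v := by
    have : G.dist (p.getVert 1) v ≤ p.tail.length := G.dist_le p.tail; omega
  have hz1 : G.dist z (p.getVert 1) = 1 := (G.dist_eq_one_iff_adj).mpr hadj
  have h4 : G.dist x (p.getVert 1) ≤ j + 1 := by
    have := hconn.dist_triangle (u := x) (v := z) (w := p.getVert 1); omega
  have h5 : G.dist x v ≤ G.dist x (p.getVert 1) + G.dist (p.getVert 1) v :=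
    hconn.dist_triangle
  exact ⟨p.getVert 1, hadj, by omega, by omega⟩

lemma exists_mid (hconn : G.Connected) (x v : V) :
    ∀ j, j ≤ G.dist x v → ∃ z, G.dist x z = j ∧ G.dist z v + j = G.dist x v := by
  intro j
  induction j with
  | zero => intro _; exact ⟨x, G.dist_self, by simp⟩
  | succ n ih =>
    intro h
    obtain ⟨z, hz1, hz2⟩ := ih (by omega)
    obtain ⟨w, _, hw1, hw2⟩ := exists_succ_adj G hconn hz1 hz2 (by omega)
    exact ⟨w, hw1, hw2⟩

end Aux

section Aux2

variable {V : Type} [Fintype V] [DecidableEq V] (G : SimpleGraph V) [DecidableRel G.Adj]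
variable {σ : V → Fin 2}

lemma sum_rule (hbip : ∀ x y : V, G.Adj x y → σ x ≠ σ y) (hconn : G.Connected)
    (k : Fin 2 → ℕ) (hdeg : ∀ x : V, G.degree x = k (σ x))
    (c b : Fin 2 → ℕ → ℕ)
    (hc : ∀ (x y : V) (i : ℕ), G.dist x y = i →
      (Finset.univ.filter (fun z => G.dist x z = i - 1 ∧ G.Adj y z)).card = c (σ x) i)
    (hb : ∀ (x y : V) (i : ℕ), G.dist x y = i →
      (Finset.univ.filter (fun z => G.dist x z = i + 1 ∧ G.Adj y z)).card = b (σ x) i)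
    {u v : V} {j : ℕ} (hj : 1 ≤ j) (hd : G.dist u v = j) :
    c (σ u) j + b (σ u) j = k (σ v) := by
  have hpart : (Finset.univ.filter fun w => G.Adj v w)
      = (Finset.univ.filter fun w => G.dist u w = j - 1 ∧ G.Adj v w)
        ∪ (Finset.univ.filter fun w => G.dist u w = j + 1 ∧ G.Adj v w) := by
    ext w
    simp only [Finset.mem_union, Finset.mem_filter, Finset.mem_univ, true_and]
    constructor
    · intro hw
      rcases adj_dist_cases G hbip hconn hw u with h | h
      · right; exact ⟨by omega, hw⟩
      · left; exact ⟨by omega, hw⟩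
    · rintro (⟨_, hw⟩ | ⟨_, hw⟩) <;> exact hw
  have hdisj : Disjoint (Finset.univ.filter fun w => G.dist u w = j - 1 ∧ G.Adj v w)
      (Finset.univ.filter fun w => G.dist u w = j + 1 ∧ G.Adj v w) := by
    rw [Finset.disjoint_left]
    intro a ha hb'
    simp only [Finset.mem_filter] at ha hb'
    omega
  have hdv : G.degree v = (Finset.univ.filter fun w => G.Adj v w).card := by
    rw [← G.neighborFinset_eq_filter]; rfl
  have := hdeg v
  rw [hdv, hpart, Finset.card_union_of_disjoint hdisj, hc u v j hd, hb u v j hd] at this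
  omega

lemma c_pos (hconn : G.Connected)
    (c : Fin 2 → ℕ → ℕ)
    (hc : ∀ (x y : V) (i : ℕ), G.dist x y = i →
      (Finset.univ.filter (fun z => G.dist x z = i - 1 ∧ G.Adj y z)).card = c (σ x) i)
    {u v : V} {j : ℕ} (hj : 1 ≤ j) (hd : G.dist u v = j) :
    1 ≤ c (σ u) j := by
  obtain ⟨z, hz1, hz2⟩ := exists_mid G hconn u v (j - 1) (by omega)
  have hzv : G.dist z v = 1 := by omega
  have hadj : G.Adj v z := ((G.dist_eq_one_iff_adj).mp hzv).symm
  rw [← hc u v j hd]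
  exact Finset.card_pos.mpr ⟨z, Finset.mem_filter.mpr ⟨Finset.mem_univ z, hz1, hadj⟩⟩

lemma b_pos (hconn : G.Connected)
    (b : Fin 2 → ℕ → ℕ)
    (hb : ∀ (x y : V) (i : ℕ), G.dist x y = i →
      (Finset.univ.filter (fun z => G.dist x z = i + 1 ∧ G.Adj y z)).card = b (σ x) i)
    {x v : V} {j : ℕ} (hlt : j < G.dist x v) :
    1 ≤ b (σ x) j := by
  obtain ⟨z, hz1, hz2⟩ := exists_mid G hconn x v j (by omega)
  obtain ⟨w, hadj, hw1, _⟩ := exists_succ_adj G hconn hz1 hz2 (by omega)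
  rw [← hb x z j hz1]
  exact Finset.card_pos.mpr ⟨w, Finset.mem_filter.mpr ⟨Finset.mem_univ w, hw1, hadj⟩⟩

end Aux2

section Key

variable {V : Type} [Fintype V] [DecidableEq V] (G : SimpleGraph V) [DecidableRel G.Adj]
variable {σ : V → Fin 2}

lemma key_ids (hbip : ∀ x y : V, G.Adj x y → σ x ≠ σ y) (hconn : G.Connected)
    (c b : Fin 2 → ℕ → ℕ)
    (hc : ∀ (x y : V) (i : ℕ), G.dist x y = i →
      (Finset.univ.filter (fun z => G.dist x z = i - 1 ∧ G.Adj y z)).card = c (σ x) i)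
    (hb : ∀ (x y : V) (i : ℕ), G.dist x y = i →
      (Finset.univ.filter (fun z => G.dist x z = i + 1 ∧ G.Adj y z)).card = b (σ x) i)
    {x v0 : V} (hσx : σ x = 0) (i : ℕ) (hi : 1 ≤ i) (hiD : i + 1 ≤ G.dist x v0) :
    (Even i → c 0 i * c 0 (i+1) = c 1 i * c 1 (i+1)) ∧
    (Odd i → b 0 i * b 0 (i+1) = b 1 i * b 1 (i+1)) := by
  classical
  -- oriented-adjacency variants of hc, hb
  have hcset : ∀ (u v : V) (j : ℕ), G.dist u v = j + 1 →
      (Finset.univ.filter fun w => G.dist u w = j ∧ G.Adj v w).card = c (σ u) (j+1) := by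
    intro u v j hd
    have := hc u v (j+1) hd
    simpa using this
  have hcset' : ∀ (u v : V) (j : ℕ), G.dist u v = j + 1 →
      (Finset.univ.filter fun w => G.dist u w = j ∧ G.Adj w v).card = c (σ u) (j+1) := by
    intro u v j hd
    rw [← hcset u v j hd]
    congr 1
    ext w
    simp only [Finset.mem_filter, Finset.mem_univ, true_and]
    rw [G.adj_comm]
  have hbset' : ∀ (u v : V) (j : ℕ), G.dist u v = j →
      (Finset.univ.filter fun w => G.dist u w = j + 1 ∧ G.Adj w v).card = b (σ u) j := by
    intro u v j hd
    rw [← hb u v j hd]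
    congr 1
    ext w
    simp only [Finset.mem_filter, Finset.mem_univ, true_and]
    rw [G.adj_comm]
  have hσy : ∀ y : V, G.Adj x y → σ y = 1 := by
    intro y hy
    have hne := hbip x y hy
    rw [hσx] at hne
    revert hne
    generalize σ y = a
    revert a; decide
  -- nonemptiness of spheres
  have hNpos0 : 0 < (Finset.univ.filter fun z : V => G.dist x z = i).card := by
    obtain ⟨z, hz1, _⟩ := exists_mid G hconn x v0 i (by omega)
    exact Finset.card_pos.mpr ⟨z, Finset.mem_filter.mpr ⟨Finset.mem_univ z, hz1⟩⟩
  have hNpos1 : 0 < (Finset.univ.filter fun z : V => G.dist x z = i + 1).card := by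
    obtain ⟨z, hz1, _⟩ := exists_mid G hconn x v0 (i+1) (by omega)
    exact Finset.card_pos.mpr ⟨z, Finset.mem_filter.mpr ⟨Finset.mem_univ z, hz1⟩⟩
  -- sphere edge-count relation
  have hE1 : (Finset.univ.filter fun z : V => G.dist x z = i).card * b 0 i
      = (Finset.univ.filter fun z : V => G.dist x z = i + 1).card * c 0 (i+1) := by
    have h1 : ∀ z ∈ (Finset.univ.filter fun z : V => G.dist x z = i),
        (Finset.univ.filter fun w => G.dist x w = i + 1 ∧ G.Adj z w).card = b 0 i := by
      intro z hz
      rw [Finset.mem_filter] at hz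
      have := hb x z i hz.2
      rwa [hσx] at this
    have h2 : ∀ w ∈ (Finset.univ.filter fun w : V => G.dist x w = i + 1),
        (Finset.univ.filter fun z => G.dist x z = i ∧ G.Adj z w).card = c 0 (i+1) := by
      intro w hw
      rw [Finset.mem_filter] at hw
      have := hcset' x w i hw.2
      rwa [hσx] at this
    calc (Finset.univ.filter fun z : V => G.dist x z = i).card * b 0 i
        = ∑ z ∈ (Finset.univ.filter fun z : V => G.dist x z = i), b 0 i := by
          rw [Finset.sum_const, smul_eq_mul]
      _ = ∑ z ∈ (Finset.univ.filter fun z : V => G.dist x z = i),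
            (Finset.univ.filter fun w => G.dist x w = i + 1 ∧ G.Adj z w).card :=
          (Finset.sum_congr rfl fun z hz => (h1 z hz).symm)
      _ = ∑ w ∈ (Finset.univ.filter fun w : V => G.dist x w = i + 1),
            (Finset.univ.filter fun z => G.dist x z = i ∧ G.Adj z w).card :=
          dcount (fun z => G.dist x z = i) (fun w => G.dist x w = i + 1) (fun z w => G.Adj z w)
      _ = ∑ w ∈ (Finset.univ.filter fun w : V => G.dist x w = i + 1), c 0 (i+1) :=
          (Finset.sum_congr rfl h2)
      _ = (Finset.univ.filter fun z : V => G.dist x z = i + 1).card * c 0 (i+1) := by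
          rw [Finset.sum_const, smul_eq_mul]
  -- Ebar sum
  have hEsum : ∀ p : Fin 2, (∀ z, G.dist x z = i → σ z = p) →
      (∑ y ∈ Finset.univ.filter (fun y => G.Adj x y),
        (Finset.univ.filter fun z => G.dist x z = i ∧ G.dist y z = i + 1).card)
      = (Finset.univ.filter fun z : V => G.dist x z = i).card * b p i := by
    intro p hp
    have h2 : ∀ z ∈ (Finset.univ.filter fun z : V => G.dist x z = i),
        (Finset.univ.filter fun y => G.Adj x y ∧ G.dist y z = i + 1).card = b p i := by
      intro z hz
      rw [Finset.mem_filter] at hz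
      have hdz : G.dist z x = i := by rw [G.dist_comm]; exact hz.2
      have hbz := hb z x i hdz
      rw [hp z hz.2] at hbz
      rw [← hbz]
      congr 1
      ext w
      simp only [Finset.mem_filter, Finset.mem_univ, true_and]
      rw [SimpleGraph.dist_comm (G := G) (u := w) (v := z)]
      exact and_comm
    calc (∑ y ∈ Finset.univ.filter (fun y => G.Adj x y),
        (Finset.univ.filter fun z => G.dist x z = i ∧ G.dist y z = i + 1).card)
        = ∑ z ∈ (Finset.univ.filter fun z : V => G.dist x z = i),
            (Finset.univ.filter fun y => G.Adj x y ∧ G.dist y z = i + 1).card :=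
          dcount (fun y => G.Adj x y) (fun z => G.dist x z = i) (fun y z => G.dist y z = i + 1)
      _ = ∑ z ∈ (Finset.univ.filter fun z : V => G.dist x z = i), b p i :=
          (Finset.sum_congr rfl h2)
      _ = (Finset.univ.filter fun z : V => G.dist x z = i).card * b p i := by
          rw [Finset.sum_const, smul_eq_mul]
  -- Fbar sum
  have hFsum : ∀ q : Fin 2, (∀ w, G.dist x w = i + 1 → σ w = q) →
      (∑ y ∈ Finset.univ.filter (fun y => G.Adj x y),
        (Finset.univ.filter fun w => G.dist x w = i + 1 ∧ G.dist y w = i).card)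
      = (Finset.univ.filter fun w : V => G.dist x w = i + 1).card * c q (i+1) := by
    intro q hq
    have h2 : ∀ w ∈ (Finset.univ.filter fun w : V => G.dist x w = i + 1),
        (Finset.univ.filter fun y => G.Adj x y ∧ G.dist y w = i).card = c q (i+1) := by
      intro w hw
      rw [Finset.mem_filter] at hw
      have hdw : G.dist w x = i + 1 := by rw [G.dist_comm]; exact hw.2
      have hcw := hcset w x i hdw
      rw [hq w hw.2] at hcw
      rw [← hcw]
      congr 1
      ext v
      simp only [Finset.mem_filter, Finset.mem_univ, true_and]
      rw [SimpleGraph.dist_comm (G := G) (u := v) (v := w)]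
      exact and_comm
    calc (∑ y ∈ Finset.univ.filter (fun y => G.Adj x y),
        (Finset.univ.filter fun w => G.dist x w = i + 1 ∧ G.dist y w = i).card)
        = ∑ w ∈ (Finset.univ.filter fun w : V => G.dist x w = i + 1),
            (Finset.univ.filter fun y => G.Adj x y ∧ G.dist y w = i).card :=
          dcount (fun y => G.Adj x y) (fun w => G.dist x w = i + 1) (fun y w => G.dist y w = i)
      _ = ∑ w ∈ (Finset.univ.filter fun w : V => G.dist x w = i + 1), c q (i+1) :=
          (Finset.sum_congr rfl h2)
      _ = (Finset.univ.filter fun w : V => G.dist x w = i + 1).card * c q (i+1) := by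
          rw [Finset.sum_const, smul_eq_mul]
  -- generic summation helper
  have key_sum : ∀ (f : V → V → ℕ) (a1 a2 : ℕ) (S : V → Finset V),
      (∀ y ∈ Finset.univ.filter (fun y => G.Adj x y), ∀ u ∈ S y, f y u + a1 = a2) →
      (∑ y ∈ Finset.univ.filter (fun y => G.Adj x y), ∑ u ∈ S y, f y u)
        + (∑ y ∈ Finset.univ.filter (fun y => G.Adj x y), (S y).card) * a1
      = (∑ y ∈ Finset.univ.filter (fun y => G.Adj x y), (S y).card) * a2 := by
    intro f a1 a2 S hrel
    have hy : ∀ y ∈ Finset.univ.filter (fun y => G.Adj x y),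
        (∑ u ∈ S y, f y u) + (S y).card * a1 = (S y).card * a2 := by
      intro y hyy
      have h := Finset.sum_congr rfl (fun u hu => hrel y hyy u hu)
      rwa [Finset.sum_add_distrib, Finset.sum_const, Finset.sum_const, smul_eq_mul,
        smul_eq_mul] at h
    calc (∑ y ∈ Finset.univ.filter (fun y => G.Adj x y), ∑ u ∈ S y, f y u)
          + (∑ y ∈ Finset.univ.filter (fun y => G.Adj x y), (S y).card) * a1
        = ∑ y ∈ Finset.univ.filter (fun y => G.Adj x y),
            ((∑ u ∈ S y, f y u) + (S y).card * a1) := by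
          rw [Finset.sum_add_distrib, Finset.sum_mul]
      _ = ∑ y ∈ Finset.univ.filter (fun y => G.Adj x y), (S y).card * a2 :=
          Finset.sum_congr rfl hy
      _ = (∑ y ∈ Finset.univ.filter (fun y => G.Adj x y), (S y).card) * a2 := by
          rw [Finset.sum_mul]
  -- the two expressions of the triple count
  have hT2 : (∑ y ∈ Finset.univ.filter (fun y => G.Adj x y),
        ∑ z ∈ (Finset.univ.filter fun z => G.dist x z = i ∧ G.dist y z = i + 1),
          (Finset.univ.filter fun w => (G.dist x w = i + 1 ∧ G.dist y w = i) ∧ G.Adj z w).card)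
      = (∑ y ∈ Finset.univ.filter (fun y => G.Adj x y),
        ∑ w ∈ (Finset.univ.filter fun w => G.dist x w = i + 1 ∧ G.dist y w = i),
          (Finset.univ.filter fun z => (G.dist x z = i ∧ G.dist y z = i + 1) ∧ G.Adj z w).card) := by
    apply Finset.sum_congr rfl
    intro y _
    exact dcount (fun z => G.dist x z = i ∧ G.dist y z = i + 1)
      (fun w => G.dist x w = i + 1 ∧ G.dist y w = i) (fun z w => G.Adj z w)
  -- local partition lemmas
  have L1 : ∀ y ∈ Finset.univ.filter (fun y => G.Adj x y),
      ∀ z ∈ (Finset.univ.filter fun z => G.dist x z = i ∧ G.dist y z = i + 1),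
      (Finset.univ.filter fun w => (G.dist x w = i + 1 ∧ G.dist y w = i) ∧ G.Adj z w).card
        + c 0 i = c 1 (i+1) := by
    intro y hy z hz
    rw [Finset.mem_filter] at hy hz
    have hxy : G.Adj x y := hy.2
    obtain ⟨-, hz1, hz2⟩ := hz
    have hsplit : (Finset.univ.filter fun w => G.dist y w = i ∧ G.Adj z w)
        = (Finset.univ.filter fun w => (G.dist x w = i + 1 ∧ G.dist y w = i) ∧ G.Adj z w)
          ∪ (Finset.univ.filter fun w => G.dist x w = i - 1 ∧ G.Adj z w) := by
      ext w
      simp only [Finset.mem_union, Finset.mem_filter, Finset.mem_univ, true_and]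
      constructor
      · rintro ⟨hdyw, hadj⟩
        rcases adj_dist_cases G hbip hconn hadj x with h | h
        · left; exact ⟨⟨by omega, hdyw⟩, hadj⟩
        · right; exact ⟨by omega, hadj⟩
      · rintro (⟨⟨_, hdyw⟩, hadj⟩ | ⟨hdxw, hadj⟩)
        · exact ⟨hdyw, hadj⟩
        · refine ⟨?_, hadj⟩
          have hwz : G.dist w z = 1 := (G.dist_eq_one_iff_adj).mpr hadj.symm
          have ht : G.dist y z ≤ G.dist y w + G.dist w z := hconn.dist_triangle
          have e1 : G.dist w y = G.dist y w := SimpleGraph.dist_comm (G := G) (u := w) (v := y)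
          have e2 : G.dist w x = G.dist x w := SimpleGraph.dist_comm (G := G) (u := w) (v := x)
          rcases adj_dist_cases G hbip hconn hxy w with h | h <;> omega
    have hdisj : Disjoint
        (Finset.univ.filter fun w => (G.dist x w = i + 1 ∧ G.dist y w = i) ∧ G.Adj z w)
        (Finset.univ.filter fun w => G.dist x w = i - 1 ∧ G.Adj z w) := by
      rw [Finset.disjoint_left]
      intro a ha hb'
      rw [Finset.mem_filter] at ha hb'
      have := ha.2.1.1
      have := hb'.2.1
      omega
    have hL := hcset y z i hz2
    rw [hσy y hxy] at hL
    have hB : (Finset.univ.filter fun w => G.dist x w = i - 1 ∧ G.Adj z w).card = c 0 i := by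
      have hd : G.dist x z = (i - 1) + 1 := by omega
      have h := hcset x z (i-1) hd
      rw [hσx, show i - 1 + 1 = i by omega] at h
      exact h
    rw [← hL, hsplit, Finset.card_union_of_disjoint hdisj, hB]
  have L2 : ∀ y ∈ Finset.univ.filter (fun y => G.Adj x y),
      ∀ z ∈ (Finset.univ.filter fun z => G.dist x z = i ∧ G.dist y z = i + 1),
      (Finset.univ.filter fun w => (G.dist x w = i + 1 ∧ G.dist y w = i) ∧ G.Adj z w).card
        + b 1 (i+1) = b 0 i := by
    intro y hy z hz
    rw [Finset.mem_filter] at hy hz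
    have hxy : G.Adj x y := hy.2
    obtain ⟨-, hz1, hz2⟩ := hz
    have hsplit : (Finset.univ.filter fun w => G.dist x w = i + 1 ∧ G.Adj z w)
        = (Finset.univ.filter fun w => (G.dist x w = i + 1 ∧ G.dist y w = i) ∧ G.Adj z w)
          ∪ (Finset.univ.filter fun w => G.dist y w = (i + 1) + 1 ∧ G.Adj z w) := by
      ext w
      simp only [Finset.mem_union, Finset.mem_filter, Finset.mem_univ, true_and]
      constructor
      · rintro ⟨hdxw, hadj⟩
        have e1 : G.dist w y = G.dist y w := SimpleGraph.dist_comm (G := G) (u := w) (v := y)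
        have e2 : G.dist w x = G.dist x w := SimpleGraph.dist_comm (G := G) (u := w) (v := x)
        rcases adj_dist_cases G hbip hconn hxy w with h | h
        · right; exact ⟨by omega, hadj⟩
        · left; exact ⟨⟨hdxw, by omega⟩, hadj⟩
      · rintro (⟨⟨hdxw, _⟩, hadj⟩ | ⟨hdyw, hadj⟩)
        · exact ⟨hdxw, hadj⟩
        · refine ⟨?_, hadj⟩
          have hzw : G.dist z w = 1 := (G.dist_eq_one_iff_adj).mpr hadj
          have ht : G.dist x w ≤ G.dist x z + G.dist z w := hconn.dist_triangle
          have e1 : G.dist w y = G.dist y w := SimpleGraph.dist_comm (G := G) (u := w) (v := y)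
          have e2 : G.dist w x = G.dist x w := SimpleGraph.dist_comm (G := G) (u := w) (v := x)
          rcases adj_dist_cases G hbip hconn hxy w with h | h <;> omega
    have hdisj : Disjoint
        (Finset.univ.filter fun w => (G.dist x w = i + 1 ∧ G.dist y w = i) ∧ G.Adj z w)
        (Finset.univ.filter fun w => G.dist y w = (i + 1) + 1 ∧ G.Adj z w) := by
      rw [Finset.disjoint_left]
      intro a ha hb'
      rw [Finset.mem_filter] at ha hb'
      have := ha.2.1.2
      have := hb'.2.1
      omega
    have hL := hb x z i hz1
    rw [hσx] at hL
    have hB : (Finset.univ.filter fun w => G.dist y w = (i + 1) + 1 ∧ G.Adj z w).card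
        = b 1 (i+1) := by
      have h := hb y z (i+1) hz2
      rw [hσy y hxy] at h
      exact h
    rw [← hL, hsplit, Finset.card_union_of_disjoint hdisj, hB]
  have L3 : ∀ y ∈ Finset.univ.filter (fun y => G.Adj x y),
      ∀ w ∈ (Finset.univ.filter fun w => G.dist x w = i + 1 ∧ G.dist y w = i),
      (Finset.univ.filter fun z => (G.dist x z = i ∧ G.dist y z = i + 1) ∧ G.Adj z w).card
        + c 1 i = c 0 (i+1) := by
    intro y hy w hw
    rw [Finset.mem_filter] at hy hw
    have hxy : G.Adj x y := hy.2
    obtain ⟨-, hw1, hw2⟩ := hw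
    have hsplit : (Finset.univ.filter fun z => G.dist x z = i ∧ G.Adj z w)
        = (Finset.univ.filter fun z => (G.dist x z = i ∧ G.dist y z = i + 1) ∧ G.Adj z w)
          ∪ (Finset.univ.filter fun z => G.dist y z = i - 1 ∧ G.Adj z w) := by
      ext z
      simp only [Finset.mem_union, Finset.mem_filter, Finset.mem_univ, true_and]
      constructor
      · rintro ⟨hdxz, hadj⟩
        have e1 : G.dist z y = G.dist y z := SimpleGraph.dist_comm (G := G) (u := z) (v := y)
        have e2 : G.dist z x = G.dist x z := SimpleGraph.dist_comm (G := G) (u := z) (v := x)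
        rcases adj_dist_cases G hbip hconn hxy z with h | h
        · left; exact ⟨⟨hdxz, by omega⟩, hadj⟩
        · right; exact ⟨by omega, hadj⟩
      · rintro (⟨⟨hdxz, _⟩, hadj⟩ | ⟨hdyz, hadj⟩)
        · exact ⟨hdxz, hadj⟩
        · refine ⟨?_, hadj⟩
          have hzw : G.dist z w = 1 := (G.dist_eq_one_iff_adj).mpr hadj
          have ht : G.dist x w ≤ G.dist x z + G.dist z w := hconn.dist_triangle
          have e1 : G.dist z y = G.dist y z := SimpleGraph.dist_comm (G := G) (u := z) (v := y)
          have e2 : G.dist z x = G.dist x z := SimpleGraph.dist_comm (G := G) (u := z) (v := x)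
          rcases adj_dist_cases G hbip hconn hxy z with h | h <;> omega
    have hdisj : Disjoint
        (Finset.univ.filter fun z => (G.dist x z = i ∧ G.dist y z = i + 1) ∧ G.Adj z w)
        (Finset.univ.filter fun z => G.dist y z = i - 1 ∧ G.Adj z w) := by
      rw [Finset.disjoint_left]
      intro a ha hb'
      rw [Finset.mem_filter] at ha hb'
      have := ha.2.1.2
      have := hb'.2.1
      omega
    have hL := hcset' x w i hw1
    rw [hσx] at hL
    have hB : (Finset.univ.filter fun z => G.dist y z = i - 1 ∧ G.Adj z w).card = c 1 i := by
      have hd : G.dist y w = (i - 1) + 1 := by omega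
      have h := hcset' y w (i-1) hd
      rw [hσy y hxy, show i - 1 + 1 = i by omega] at h
      exact h
    rw [← hL, hsplit, Finset.card_union_of_disjoint hdisj, hB]
  have L4 : ∀ y ∈ Finset.univ.filter (fun y => G.Adj x y),
      ∀ w ∈ (Finset.univ.filter fun w => G.dist x w = i + 1 ∧ G.dist y w = i),
      (Finset.univ.filter fun z => (G.dist x z = i ∧ G.dist y z = i + 1) ∧ G.Adj z w).card
        + b 0 (i+1) = b 1 i := by
    intro y hy w hw
    rw [Finset.mem_filter] at hy hw
    have hxy : G.Adj x y := hy.2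
    obtain ⟨-, hw1, hw2⟩ := hw
    have hsplit : (Finset.univ.filter fun z => G.dist y z = i + 1 ∧ G.Adj z w)
        = (Finset.univ.filter fun z => (G.dist x z = i ∧ G.dist y z = i + 1) ∧ G.Adj z w)
          ∪ (Finset.univ.filter fun z => G.dist x z = (i + 1) + 1 ∧ G.Adj z w) := by
      ext z
      simp only [Finset.mem_union, Finset.mem_filter, Finset.mem_univ, true_and]
      constructor
      · rintro ⟨hdyz, hadj⟩
        have e1 : G.dist z y = G.dist y z := SimpleGraph.dist_comm (G := G) (u := z) (v := y)
        have e2 : G.dist z x = G.dist x z := SimpleGraph.dist_comm (G := G) (u := z) (v := x)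
        rcases adj_dist_cases G hbip hconn hxy z with h | h
        · left; exact ⟨⟨by omega, hdyz⟩, hadj⟩
        · right; exact ⟨by omega, hadj⟩
      · rintro (⟨⟨_, hdyz⟩, hadj⟩ | ⟨hdxz, hadj⟩)
        · exact ⟨hdyz, hadj⟩
        · refine ⟨?_, hadj⟩
          have hzw : G.dist z w = 1 := (G.dist_eq_one_iff_adj).mpr hadj
          have ht : G.dist y z ≤ G.dist y w + G.dist w z := hconn.dist_triangle
          have e0 : G.dist w z = G.dist z w := SimpleGraph.dist_comm (G := G) (u := w) (v := z)
          have e1 : G.dist z y = G.dist y z := SimpleGraph.dist_comm (G := G) (u := z) (v := y)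
          have e2 : G.dist z x = G.dist x z := SimpleGraph.dist_comm (G := G) (u := z) (v := x)
          rcases adj_dist_cases G hbip hconn hxy z with h | h <;> omega
    have hdisj : Disjoint
        (Finset.univ.filter fun z => (G.dist x z = i ∧ G.dist y z = i + 1) ∧ G.Adj z w)
        (Finset.univ.filter fun z => G.dist x z = (i + 1) + 1 ∧ G.Adj z w) := by
      rw [Finset.disjoint_left]
      intro a ha hb'
      rw [Finset.mem_filter] at ha hb'
      have := ha.2.1.1
      have := hb'.2.1
      omega
    have hL := hbset' y w i hw2
    rw [hσy y hxy] at hL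
    have hB : (Finset.univ.filter fun z => G.dist x z = (i + 1) + 1 ∧ G.Adj z w).card
        = b 0 (i+1) := by
      have h := hbset' x w (i+1) hw1
      rw [hσx] at h
      exact h
    rw [← hL, hsplit, Finset.card_union_of_disjoint hdisj, hB]
  -- summed relations
  have RC := key_sum
    (fun y z => (Finset.univ.filter fun w => (G.dist x w = i + 1 ∧ G.dist y w = i) ∧ G.Adj z w).card)
    (c 0 i) (c 1 (i+1))
    (fun y => Finset.univ.filter fun z => G.dist x z = i ∧ G.dist y z = i + 1) L1
  have RB := key_sum
    (fun y z => (Finset.univ.filter fun w => (G.dist x w = i + 1 ∧ G.dist y w = i) ∧ G.Adj z w).card)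
    (b 1 (i+1)) (b 0 i)
    (fun y => Finset.univ.filter fun z => G.dist x z = i ∧ G.dist y z = i + 1) L2
  have RC' := key_sum
    (fun y w => (Finset.univ.filter fun z => (G.dist x z = i ∧ G.dist y z = i + 1) ∧ G.Adj z w).card)
    (c 1 i) (c 0 (i+1))
    (fun y => Finset.univ.filter fun w => G.dist x w = i + 1 ∧ G.dist y w = i) L3
  have RB' := key_sum
    (fun y w => (Finset.univ.filter fun z => (G.dist x z = i ∧ G.dist y z = i + 1) ∧ G.Adj z w).card)
    (b 0 (i+1)) (b 1 i)
    (fun y => Finset.univ.filter fun w => G.dist x w = i + 1 ∧ G.dist y w = i) L4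
  rw [← hT2] at RC' RB'
  constructor
  · intro hev
    have hp : ∀ z, G.dist x z = i → σ z = 0 := by
      intro z hz
      have hpar := dist_par G hbip hconn x z
      rw [hz, hσx] at hpar
      exact (hpar.mp hev).symm
    have hq : ∀ w, G.dist x w = i + 1 → σ w = 1 := by
      intro w hw
      have hpar := dist_par G hbip hconn x w
      rw [hw, hσx] at hpar
      have hnot : ¬ Even (i + 1) := by simp [Nat.even_add_one, hev]
      have h0 : ¬ (0 = σ w) := fun h => hnot (hpar.mpr h)
      revert h0
      generalize σ w = a
      revert a; decide
    rw [hEsum 0 hp] at RC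
    rw [hFsum 1 hq] at RC'
    rw [hE1] at RC
    have hEq : ((Finset.univ.filter fun z : V => G.dist x z = i + 1).card * c 0 (i+1)) * c 1 (i+1)
        = ((Finset.univ.filter fun z : V => G.dist x z = i + 1).card * c 1 (i+1)) * c 0 (i+1) := by
      ring
    have hAB := Nat.add_left_cancel (RC.trans (hEq.trans RC'.symm))
    have hfin : (Finset.univ.filter fun z : V => G.dist x z = i + 1).card * (c 0 i * c 0 (i+1))
        = (Finset.univ.filter fun z : V => G.dist x z = i + 1).card * (c 1 i * c 1 (i+1)) := by
      calc (Finset.univ.filter fun z : V => G.dist x z = i + 1).card * (c 0 i * c 0 (i+1))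
          = ((Finset.univ.filter fun z : V => G.dist x z = i + 1).card * c 0 (i+1)) * c 0 i := by
            ring
        _ = ((Finset.univ.filter fun z : V => G.dist x z = i + 1).card * c 1 (i+1)) * c 1 i :=
            hAB
        _ = (Finset.univ.filter fun z : V => G.dist x z = i + 1).card * (c 1 i * c 1 (i+1)) := by
            ring
    exact Nat.eq_of_mul_eq_mul_left hNpos1 hfin
  · intro hodd
    have hp : ∀ z, G.dist x z = i → σ z = 1 := by
      intro z hz
      have hpar := dist_par G hbip hconn x z
      rw [hz, hσx] at hpar
      have hnot : ¬ Even i := Nat.not_even_iff_odd.mpr hodd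
      have h0 : ¬ (0 = σ z) := fun h => hnot (hpar.mpr h)
      revert h0
      generalize σ z = a
      revert a; decide
    have hq : ∀ w, G.dist x w = i + 1 → σ w = 0 := by
      intro w hw
      have hpar := dist_par G hbip hconn x w
      rw [hw, hσx] at hpar
      have hyes : Even (i + 1) := by
        rcases hodd with ⟨m, hm⟩
        exact ⟨m + 1, by omega⟩
      exact (hpar.mp hyes).symm
    rw [hEsum 1 hp] at RB
    rw [hFsum 0 hq, ← hE1] at RB'
    have hEq : ((Finset.univ.filter fun z : V => G.dist x z = i).card * b 1 i) * b 0 i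
        = ((Finset.univ.filter fun z : V => G.dist x z = i).card * b 0 i) * b 1 i := by
      ring
    have hAB := Nat.add_left_cancel (RB.trans (hEq.trans RB'.symm))
    have hfin : (Finset.univ.filter fun z : V => G.dist x z = i).card * (b 1 i * b 1 (i+1))
        = (Finset.univ.filter fun z : V => G.dist x z = i).card * (b 0 i * b 0 (i+1)) := by
      calc (Finset.univ.filter fun z : V => G.dist x z = i).card * (b 1 i * b 1 (i+1))
          = ((Finset.univ.filter fun z : V => G.dist x z = i).card * b 1 i) * b 1 (i+1) := by
            ring
        _ = ((Finset.univ.filter fun z : V => G.dist x z = i).card * b 0 i) * b 0 (i+1) :=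
            hAB
        _ = (Finset.univ.filter fun z : V => G.dist x z = i).card * (b 0 i * b 0 (i+1)) := by
            ring
    exact (Nat.eq_of_mul_eq_mul_left hNpos0 hfin).symm

end Key

theorem stmt7 {V : Type} [Fintype V] [DecidableEq V]
    (G : SimpleGraph V) [DecidableRel G.Adj]
    (hconn : G.Connected) (hcard : 2 ≤ Fintype.card V)
    (σ : V → Fin 2)
    (hbip : ∀ x y : V, G.Adj x y → σ x ≠ σ y)
    (k : Fin 2 → ℕ)
    (hdeg : ∀ x : V, G.degree x = k (σ x))
    (c b : Fin 2 → ℕ → ℕ)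
    (hc : ∀ (x y : V) (i : ℕ), G.dist x y = i →
      (Finset.univ.filter (fun z => G.dist x z = i - 1 ∧ G.Adj y z)).card = c (σ x) i)
    (hb : ∀ (x y : V) (i : ℕ), G.dist x y = i →
      (Finset.univ.filter (fun z => G.dist x z = i + 1 ∧ G.Adj y z)).card = b (σ x) i)
    (D : Fin 2 → ℕ)
    (hDub : ∀ x y : V, G.dist x y ≤ D (σ x))
    (hDmax : ∀ ℓ : Fin 2, ∃ x y : V, σ x = ℓ ∧ G.dist x y = D ℓ)
    (hD0 : 1 ≤ D 0) (hD01 : D 0 ≤ D 1)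
    (hk01 : k 1 < k 0) :
    ∀ i : ℕ, 1 ≤ i → i ≤ D 0 - 1 →
      (Even i → k 0 * b 1 i < k 1 * b 0 i ∧ k 1 * c 0 i < k 0 * c 1 i) ∧
      (Odd i → k 0 * b 0 i < k 1 * b 1 i ∧ k 1 * c 1 i < k 0 * c 0 i) := by
  classical
  obtain ⟨x0, v0, hx0, hx0d⟩ := hDmax 0
  obtain ⟨x1, v1, hx1, hx1d⟩ := hDmax 1
  -- parity of spheres
  have hpar0 : ∀ (z : V) (j : ℕ), G.dist x0 z = j → (Even j → σ z = 0) ∧ (¬ Even j → σ z = 1) := by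
    intro z j hz
    have hpar := dist_par G hbip hconn x0 z
    rw [hz, hx0] at hpar
    constructor
    · intro hev; exact (hpar.mp hev).symm
    · intro hodd
      have h0 : ¬ (0 = σ z) := fun h => hodd (hpar.mpr h)
      revert h0; generalize σ z = a; revert a; decide
  have hpar1 : ∀ (z : V) (j : ℕ), G.dist x1 z = j → (Even j → σ z = 1) ∧ (¬ Even j → σ z = 0) := by
    intro z j hz
    have hpar := dist_par G hbip hconn x1 z
    rw [hz, hx1] at hpar
    constructor
    · intro hev; exact (hpar.mp hev).symm
    · intro hodd
      have h0 : ¬ ((1 : Fin 2) = σ z) := fun h => hodd (hpar.mpr h)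
      revert h0; generalize σ z = a; revert a; decide
  -- sum rules
  have sumA : ∀ j, 1 ≤ j → j ≤ D 0 →
      (Even j → c 0 j + b 0 j = k 0 ∧ c 1 j + b 1 j = k 1) ∧
      (¬ Even j → c 0 j + b 0 j = k 1 ∧ c 1 j + b 1 j = k 0) := by
    intro j hj1 hjD
    obtain ⟨z, hz, -⟩ := exists_mid G hconn x0 v0 j (by rw [hx0d]; omega)
    have h0 := sum_rule G hbip hconn k hdeg c b hc hb hj1 hz
    rw [hx0] at h0
    obtain ⟨z', hz', -⟩ := exists_mid G hconn x1 v1 j (by rw [hx1d]; omega)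
    have h1 := sum_rule G hbip hconn k hdeg c b hc hb hj1 hz'
    rw [hx1] at h1
    constructor
    · intro hev
      rw [(hpar0 z j hz).1 hev] at h0
      rw [(hpar1 z' j hz').1 hev] at h1
      exact ⟨h0, h1⟩
    · intro hodd
      rw [(hpar0 z j hz).2 hodd] at h0
      rw [(hpar1 z' j hz').2 hodd] at h1
      exact ⟨h0, h1⟩
  -- positivity
  have hc0pos : ∀ j, 1 ≤ j → j ≤ D 0 → 1 ≤ c 0 j := by
    intro j hj1 hjD
    obtain ⟨z, hz, -⟩ := exists_mid G hconn x0 v0 j (by rw [hx0d]; omega)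
    have := c_pos G hconn c hc hj1 hz
    rwa [hx0] at this
  have hb0pos : ∀ j, j < D 0 → 1 ≤ b 0 j := by
    intro j hjD
    have := b_pos G hconn b hb (x := x0) (v := v0) (j := j) (by rw [hx0d]; omega)
    rwa [hx0] at this
  -- base case values
  have hbase : c 0 1 = 1 ∧ c 1 1 = 1 := by
    obtain ⟨z1, hz1, -⟩ := exists_mid G hconn x0 v0 1 (by rw [hx0d]; omega)
    have hadj : G.Adj x0 z1 := (G.dist_eq_one_iff_adj).mp hz1
    have hone : (Finset.univ.filter fun w => G.dist x0 w = 0 ∧ G.Adj z1 w) = {x0} := by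
      ext w
      simp only [Finset.mem_filter, Finset.mem_univ, true_and, Finset.mem_singleton]
      constructor
      · rintro ⟨hd, -⟩
        exact (hconn.dist_eq_zero_iff.mp hd).symm
      · rintro rfl
        exact ⟨G.dist_self, hadj.symm⟩
    have h01 := hc x0 z1 1 hz1
    rw [hx0] at h01
    have e1 : c 0 1 = 1 := by
      rw [← h01]
      simp only [Nat.sub_self]
      rw [hone, Finset.card_singleton]
    have hone' : (Finset.univ.filter fun w => G.dist z1 w = 0 ∧ G.Adj x0 w) = {z1} := by
      ext w
      simp only [Finset.mem_filter, Finset.mem_univ, true_and, Finset.mem_singleton]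
      constructor
      · rintro ⟨hd, -⟩
        exact (hconn.dist_eq_zero_iff.mp hd).symm
      · rintro rfl
        exact ⟨G.dist_self, hadj⟩
    have hdz : G.dist z1 x0 = 1 := by
      rw [SimpleGraph.dist_comm (G := G) (u := z1) (v := x0)]; exact hz1
    have h11 := hc z1 x0 1 hdz
    rw [(hpar0 z1 1 hz1).2 (by decide)] at h11
    have e2 : c 1 1 = 1 := by
      rw [← h11]
      simp only [Nat.sub_self]
      rw [hone', Finset.card_singleton]
    exact ⟨e1, e2⟩
  -- identities
  have hids : ∀ j, 1 ≤ j → j + 1 ≤ D 0 →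
      (Even j → c 0 j * c 0 (j+1) = c 1 j * c 1 (j+1)) ∧
      (Odd j → b 0 j * b 0 (j+1) = b 1 j * b 1 (j+1)) :=
    fun j hj1 hjD => key_ids G hbip hconn c b hc hb hx0 j hj1 (by rw [hx0d]; omega)
  -- the main induction on the c-inequalities
  have main : ∀ j, 1 ≤ j → j ≤ D 0 - 1 →
      (Even j → k 1 * c 0 j < k 0 * c 1 j) ∧ (¬ Even j → k 1 * c 1 j < k 0 * c 0 j) := by
    intro j
    induction j with
    | zero => intro h; omega
    | succ n ih =>
      intro h1 h2
      by_cases hn : n = 0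
      · subst hn
        constructor
        · intro hev; exact absurd hev (by decide)
        · intro _
          rw [hbase.1, hbase.2]
          omega
      · have hn1 : 1 ≤ n := by omega
        have ihn := ih hn1 (by omega)
        rcases Nat.even_or_odd n with hev | hodd
        · -- n even, n+1 odd: use c-identity at n
          have hid := (hids n hn1 (by omega)).1 hev
          have IH := ihn.1 hev
          constructor
          · intro h'; exact absurd h' (by simp [Nat.even_add_one, hev])
          · intro _
            have hc0 : 1 ≤ c 0 (n+1) := hc0pos (n+1) (by omega) (by omega)
            have hc1n : 1 ≤ c 1 n := by
              rcases Nat.eq_zero_or_pos (c 1 n) with h | h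
              · rw [h, Nat.mul_zero] at IH; omega
              · exact h
            have step : (k 1 * c 1 (n+1)) * c 1 n < (k 0 * c 0 (n+1)) * c 1 n := by
              calc (k 1 * c 1 (n+1)) * c 1 n = k 1 * (c 1 n * c 1 (n+1)) := by ring
                _ = k 1 * (c 0 n * c 0 (n+1)) := by rw [hid]
                _ = (k 1 * c 0 n) * c 0 (n+1) := by ring
                _ < (k 0 * c 1 n) * c 0 (n+1) := by
                    exact mul_lt_mul_of_pos_right IH (by omega)
                _ = (k 0 * c 0 (n+1)) * c 1 n := by ring
            exact lt_of_mul_lt_mul_right step (Nat.zero_le _)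
        · -- n odd, n+1 even: use b-identity at n
          have hid := (hids n hn1 (by omega)).2 hodd
          have hnev : ¬ Even n := Nat.not_even_iff_odd.mpr hodd
          have IH := ihn.2 hnev
          constructor
          · intro _
            -- convert IH to b-form at n
            have hsums := (sumA n hn1 (by omega)).2 hnev
            have hb0n : k 0 * b 0 n < k 1 * b 1 n := by
              have e1 : k 0 * c 0 n + k 0 * b 0 n = k 0 * k 1 := by
                rw [← Nat.mul_add, hsums.1]
              have e2 : k 1 * c 1 n + k 1 * b 1 n = k 1 * k 0 := by
                rw [← Nat.mul_add, hsums.2]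
              have e3 : k 0 * k 1 = k 1 * k 0 := Nat.mul_comm _ _
              linarith
            have hb1n : 1 ≤ b 1 n := by
              rcases Nat.eq_zero_or_pos (b 1 n) with h | h
              · rw [h, Nat.mul_zero] at hb0n; omega
              · exact h
            have hb0s : 1 ≤ b 0 (n+1) := hb0pos (n+1) (by omega)
            have step : (k 0 * b 1 (n+1)) * b 1 n < (k 1 * b 0 (n+1)) * b 1 n := by
              calc (k 0 * b 1 (n+1)) * b 1 n = k 0 * (b 1 n * b 1 (n+1)) := by ring
                _ = k 0 * (b 0 n * b 0 (n+1)) := by rw [hid]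
                _ = (k 0 * b 0 n) * b 0 (n+1) := by ring
                _ < (k 1 * b 1 n) * b 0 (n+1) := by
                    exact mul_lt_mul_of_pos_right hb0n (by omega)
                _ = (k 1 * b 0 (n+1)) * b 1 n := by ring
            have hbfin : k 0 * b 1 (n+1) < k 1 * b 0 (n+1) :=
              lt_of_mul_lt_mul_right step (Nat.zero_le _)
            -- convert back to c-form at n+1 (even)
            have hsums' := (sumA (n+1) (by omega) (by omega)).1 (by
              rw [Nat.even_add_one]; exact hnev)
            have e1 : k 1 * c 0 (n+1) + k 1 * b 0 (n+1) = k 1 * k 0 := by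
              rw [← Nat.mul_add, hsums'.1]
            have e2 : k 0 * c 1 (n+1) + k 0 * b 1 (n+1) = k 0 * k 1 := by
              rw [← Nat.mul_add, hsums'.2]
            have e3 : k 0 * k 1 = k 1 * k 0 := Nat.mul_comm _ _
            linarith
          · intro h'
            exact absurd (by rw [Nat.even_add_one]; exact hnev) h'
  -- final assembly
  intro i hi1 hiD
  have hiD0 : i ≤ D 0 := by omega
  constructor
  · intro hev
    have hcineq := (main i hi1 hiD).1 hev
    have hsums := (sumA i hi1 hiD0).1 hev
    refine ⟨?_, hcineq⟩
    have e1 : k 1 * c 0 i + k 1 * b 0 i = k 1 * k 0 := by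
      rw [← Nat.mul_add, hsums.1]
    have e2 : k 0 * c 1 i + k 0 * b 1 i = k 0 * k 1 := by
      rw [← Nat.mul_add, hsums.2]
    have e3 : k 0 * k 1 = k 1 * k 0 := Nat.mul_comm _ _
    linarith
  · intro hodd
    have hnev : ¬ Even i := Nat.not_even_iff_odd.mpr hodd
    have hcineq := (main i hi1 hiD).2 hnev
    have hsums := (sumA i hi1 hiD0).2 hnev
    refine ⟨?_, hcineq⟩
    have e1 : k 0 * c 0 i + k 0 * b 0 i = k 0 * k 1 := by
      rw [← Nat.mul_add, hsums.1]
    have e2 : k 1 * c 1 i + k 1 * b 1 i = k 1 * k 0 := by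
      rw [← Nat.mul_add, hsums.2]
    have e3 : k 0 * k 1 = k 1 * k 0 := Nat.mul_comm _ _
    linarith
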